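/- Approximate differential privacy of the Gaussian mechanism. Let n be a positive integer, ρ > 0, and let μ₁, μ₂ ∈ ℝ satisfy |μ₁ − μ₂| ≤ 1/n. Set v = 1/(2n²ρ) and, for δ ∈ (0,1), set ε = ρ + 2√(ρ · log(1/δ)). Then for every Borel set S ⊆ ℝ, N(μ₁, v)(S) ≤ e^ε · N(μ₂, v)(S) + δ, where N(μ, v) denotes the Gaussian probability measure on ℝ with mean μ and variance v. -/

import Mathlib

open MeasureTheory Real

/-- The Gaussian probability measure on `ℝ` with mean `μ` and variance `v`, given by
its Lebesgue density `x ↦ (2πv)^{-1/2} exp(−(x−μ)²/(2v))`. -/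
noncomputable def gaussMeasure (μ v : ℝ) : Measure ℝ :=
  volume.withDensity fun x =>
    ENNReal.ofReal ((Real.sqrt (2 * π * v))⁻¹ * Real.exp (-(x - μ) ^ 2 / (2 * v)))

/-- The density of `gaussMeasure`. -/
noncomputable def gdens (m v : ℝ) (x : ℝ) : ℝ :=
  (Real.sqrt (2 * π * v))⁻¹ * Real.exp (-(x - m) ^ 2 / (2 * v))

lemma gdens_measurable (m v : ℝ) : Measurable (gdens m v) :=
  ((((measurable_id.sub_const m).pow_const 2).neg.div_const (2 * v)).exp.const_mul _)

lemma gdens_nonneg (m v : ℝ) (x : ℝ) : 0 ≤ gdens m v x := by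
  unfold gdens; positivity

lemma gaussMeasure_eq (m v : ℝ) :
    gaussMeasure m v = volume.withDensity fun x => ENNReal.ofReal (gdens m v x) := rfl

lemma gauss_mass (a v : ℝ) (hv : 0 < v) : gaussMeasure a v Set.univ = 1 := by
  have hvne : v.toNNReal ≠ 0 := by
    simp only [ne_eq, Real.toNNReal_eq_zero, not_le]; exact hv
  have hcoe : ((v.toNNReal : ℝ)) = v := Real.coe_toNNReal v hv.le
  have hfun : (fun x => ENNReal.ofReal (gdens a v x)) =
      fun x => ENNReal.ofReal (ProbabilityTheory.gaussianPDFReal a v.toNNReal x) := by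
    ext x
    rw [ProbabilityTheory.gaussianPDFReal, gdens, hcoe]
  rw [gaussMeasure_eq, hfun, withDensity_apply _ MeasurableSet.univ, Measure.restrict_univ,
    ProbabilityTheory.lintegral_gaussianPDFReal_eq_one a hvne]

lemma gauss_compare (m a v c : ℝ) (hc : 0 ≤ c) (T : Set ℝ) (hT : MeasurableSet T)
    (h : ∀ x ∈ T, gdens m v x ≤ c * gdens a v x) :
    gaussMeasure m v T ≤ ENNReal.ofReal c * gaussMeasure a v T := by
  rw [gaussMeasure_eq, gaussMeasure_eq, withDensity_apply _ hT, withDensity_apply _ hT,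
    ← lintegral_const_mul _ ((gdens_measurable a v).ennreal_ofReal)]
  refine setLIntegral_mono (measurable_const.mul ((gdens_measurable a v).ennreal_ofReal)) ?_
  intro x hx
  rw [← ENNReal.ofReal_mul hc]
  exact ENNReal.ofReal_le_ofReal (h x hx)

lemma gauss_tail (m a v : ℝ) (hv : 0 < v) (T : Set ℝ) (hT : MeasurableSet T)
    (h : ∀ x ∈ T, 0 ≤ (x - a) * (a - m)) :
    gaussMeasure m v T ≤ ENNReal.ofReal (Real.exp (-(a - m) ^ 2 / (2 * v))) := by
  have h2v : (0 : ℝ) < 2 * v := by linarith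
  have hi : (0 : ℝ) ≤ (Real.sqrt (2 * π * v))⁻¹ := inv_nonneg.mpr (Real.sqrt_nonneg _)
  calc gaussMeasure m v T
      ≤ ENNReal.ofReal (Real.exp (-(a - m) ^ 2 / (2 * v))) * gaussMeasure a v T := by
        refine gauss_compare m a v _ (Real.exp_nonneg _) T hT (fun x hx => ?_)
        unfold gdens
        have hexp : Real.exp (-(x - m) ^ 2 / (2 * v)) ≤
            Real.exp (-(a - m) ^ 2 / (2 * v)) * Real.exp (-(x - a) ^ 2 / (2 * v)) := by
          rw [← Real.exp_add, Real.exp_le_exp, ← add_div, div_le_div_iff₀ h2v h2v]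
          nlinarith [mul_nonneg (h x hx) h2v.le]
        have hmul := mul_le_mul_of_nonneg_left hexp hi
        calc (Real.sqrt (2 * π * v))⁻¹ * Real.exp (-(x - m) ^ 2 / (2 * v))
            ≤ (Real.sqrt (2 * π * v))⁻¹ * (Real.exp (-(a - m) ^ 2 / (2 * v)) *
              Real.exp (-(x - a) ^ 2 / (2 * v))) := hmul
          _ = Real.exp (-(a - m) ^ 2 / (2 * v)) *
              ((Real.sqrt (2 * π * v))⁻¹ * Real.exp (-(x - a) ^ 2 / (2 * v))) := by ring
    _ ≤ ENNReal.ofReal (Real.exp (-(a - m) ^ 2 / (2 * v))) * 1 :=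
        mul_le_mul_right ((measure_mono (Set.subset_univ T)).trans_eq (gauss_mass a v hv)) _
    _ = _ := mul_one _

set_option maxHeartbeats 1000000 in
/-- Approximate differential privacy of the Gaussian mechanism: if `|μ₁ − μ₂| ≤ 1/n`,
`v = 1/(2n²ρ)` and `ε = ρ + 2√(ρ log(1/δ))`, then for every Borel set `S`,
`N(μ₁,v)(S) ≤ e^ε N(μ₂,v)(S) + δ`. -/
theorem gaussian_mechanism_approxDP (n : ℕ) (hn : 0 < n) (ρ : ℝ) (hρ : 0 < ρ)
    (μ₁ μ₂ : ℝ) (hsens : |μ₁ - μ₂| ≤ 1 / n)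
    (v δ ε : ℝ) (hv : v = 1 / (2 * n ^ 2 * ρ)) (hδ : δ ∈ Set.Ioo (0 : ℝ) 1)
    (hε : ε = ρ + 2 * Real.sqrt (ρ * Real.log (1 / δ))) :
    ∀ S : Set ℝ, MeasurableSet S →
      gaussMeasure μ₁ v S ≤ ENNReal.ofReal (Real.exp ε) * gaussMeasure μ₂ v S +
        ENNReal.ofReal δ := by
  obtain ⟨hδ0, hδ1⟩ := hδ
  have hn' : (0 : ℝ) < (n : ℝ) := by exact_mod_cast hn
  have hv0 : 0 < v := by rw [hv]; positivity
  have h2v : (0 : ℝ) < 2 * v := by linarith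
  set L := Real.log (1 / δ) with hL_def
  have hL0 : 0 ≤ L := Real.log_nonneg (by rw [le_div_iff₀ hδ0]; linarith)
  set s := Real.sqrt (ρ * L) with hs_def
  have hs0 : 0 ≤ s := Real.sqrt_nonneg _
  have hs2 : s ^ 2 = ρ * L := Real.sq_sqrt (mul_nonneg hρ.le hL0)
  have hερ : ρ ≤ ε := by rw [hε]; linarith
  have hε0 : 0 < ε := lt_of_lt_of_le hρ hερ
  intro S hS
  set d := μ₁ - μ₂ with hd_def
  have hd2 : d ^ 2 ≤ 2 * v * ρ := by
    have h2 : d ^ 2 ≤ (1 / (n : ℝ)) ^ 2 := by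
      rw [← sq_abs]; exact pow_le_pow_left₀ (abs_nonneg d) hsens 2
    have h3 : 2 * v * ρ = (1 / (n : ℝ)) ^ 2 := by
      rw [hv]; field_simp
    rw [h3]; exact h2
  set A : Set ℝ := {x | gdens μ₁ v x ≤ Real.exp ε * gdens μ₂ v x} with hA_def
  have hA : MeasurableSet A :=
    measurableSet_le (gdens_measurable _ _) ((gdens_measurable _ _).const_mul _)
  have h1 : gaussMeasure μ₁ v (S ∩ A) ≤
      ENNReal.ofReal (Real.exp ε) * gaussMeasure μ₂ v (S ∩ A) :=
    gauss_compare μ₁ μ₂ v _ (Real.exp_nonneg _) _ (hS.inter hA) (fun x hx => hx.2)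
  -- key: the bad event has small probability
  have h2 : gaussMeasure μ₁ v (S \ A) ≤ ENNReal.ofReal δ := by
    rcases eq_or_ne d 0 with hd0 | hdne
    · -- μ₁ = μ₂, A = univ
      have hμ : μ₁ = μ₂ := by
        have := sub_eq_zero.mp (hd_def ▸ hd0)
        linarith [this]
      have hAuniv : ∀ x, x ∈ A := by
        intro x
        show gdens μ₁ v x ≤ Real.exp ε * gdens μ₂ v x
        rw [hμ]
        exact le_mul_of_one_le_left (gdens_nonneg _ _ _) (Real.one_le_exp hε0.le)
      have hz : gaussMeasure μ₁ v (S \ A) = 0 :=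
        measure_mono_null (fun x hx => absurd (hAuniv x) hx.2) measure_empty
      rw [hz]; exact zero_le
    · set a := (2 * v * ε + μ₁ ^ 2 - μ₂ ^ 2) / (2 * d) with ha_def
      have hipos : (0 : ℝ) < (Real.sqrt (2 * π * v))⁻¹ :=
        inv_pos.mpr (Real.sqrt_pos.mpr (by positivity))
      -- characterization of the complement of A
      have hcompl : ∀ x ∉ A, 2 * v * ε + μ₁ ^ 2 - μ₂ ^ 2 < 2 * d * x := by
        intro x hx
        have hlt : Real.exp ε * gdens μ₂ v x < gdens μ₁ v x := not_le.mp hx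
        unfold gdens at hlt
        have h' : (Real.sqrt (2 * π * v))⁻¹ * (Real.exp ε * Real.exp (-(x - μ₂) ^ 2 / (2 * v)))
            < (Real.sqrt (2 * π * v))⁻¹ * Real.exp (-(x - μ₁) ^ 2 / (2 * v)) := by
          nlinarith [hlt]
        have h'' := (mul_lt_mul_iff_right₀ hipos).mp h'
        rw [← Real.exp_add] at h''
        have hlt2 := Real.exp_lt_exp.mp h''
        have h3 := mul_lt_mul_of_pos_right hlt2 h2v
        rw [add_mul, div_mul_cancel₀ _ (ne_of_gt h2v), div_mul_cancel₀ _ (ne_of_gt h2v)] at h3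
        rw [hd_def]
        nlinarith [h3]
      -- shared arithmetic: the tail bound exponent is large enough
      have hd2pos : (0 : ℝ) < (2 * d) ^ 2 :=
        lt_of_le_of_ne (sq_nonneg _) (Ne.symm (pow_ne_zero 2 (by simp [hdne])))
      have haμ : a - μ₁ = (2 * v * ε - d ^ 2) / (2 * d) := by
        rw [ha_def, hd_def]
        have h2d : (2 : ℝ) * (μ₁ - μ₂) ≠ 0 := by
          rw [hd_def] at hdne
          intro hcon
          exact hdne (by linarith [mul_eq_zero.mp hcon])
        have h2d' : μ₁ - μ₂ ≠ 0 := hdne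
        field_simp
        ring
      have hnum : 0 ≤ 2 * v * ε - d ^ 2 := by
        nlinarith [mul_le_mul_of_nonneg_left hερ (le_of_lt h2v)]
      have hu : 0 ≤ 2 * v * ρ - d ^ 2 := sub_nonneg.mpr hd2
      have e3 : 16 * v ^ 2 * s ^ 2 = 16 * v ^ 2 * (ρ * L) := by rw [hs2]
      have key : 8 * v * d ^ 2 * L ≤ (2 * v * ε - d ^ 2) ^ 2 := by
        have e1 : 2 * v * ε - d ^ 2 = (2 * v * ρ - d ^ 2) + 4 * v * s := by rw [hε]; ring
        rw [e1]
        nlinarith [sq_nonneg (2 * v * ρ - d ^ 2),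
          mul_nonneg (mul_nonneg hv0.le hs0) hu,
          mul_nonneg (mul_nonneg hv0.le hL0) hu, e3]
      have harith : L ≤ (a - μ₁) ^ 2 / (2 * v) := by
        rw [haμ, div_pow, div_div, le_div_iff₀ (by positivity : (0:ℝ) < (2*d)^2 * (2*v))]
        nlinarith [key]
      have hexpδ : Real.exp (-(a - μ₁) ^ 2 / (2 * v)) ≤ δ := by
        have hLd : L = -Real.log δ := by rw [hL_def, one_div, Real.log_inv]
        calc Real.exp (-(a - μ₁) ^ 2 / (2 * v)) ≤ Real.exp (Real.log δ) := by
              rw [Real.exp_le_exp, neg_div]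
              linarith [harith]
          _ = δ := Real.exp_log hδ0
      rcases hdne.lt_or_gt with hdneg | hdpos
      · -- d < 0 : left tail
        have h2dneg : 2 * d < 0 := by linarith
        have hge : a ≤ μ₁ := by
          have hle : a - μ₁ ≤ 0 := by
            rw [haμ]
            exact div_nonpos_of_nonneg_of_nonpos hnum h2dneg.le
          linarith
        have hsub : S \ A ⊆ {x | x ≤ a} := by
          intro x hx
          have hkey := hcompl x hx.2
          show x ≤ a
          rw [ha_def, le_div_iff_of_neg h2dneg]
          nlinarith [hkey]
        calc gaussMeasure μ₁ v (S \ A)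
            ≤ gaussMeasure μ₁ v {x | x ≤ a} := measure_mono hsub
          _ ≤ ENNReal.ofReal (Real.exp (-(a - μ₁) ^ 2 / (2 * v))) := by
              refine gauss_tail μ₁ a v hv0 _ measurableSet_Iic (fun x hx => ?_)
              have hx' : x ≤ a := hx
              nlinarith [mul_nonneg (sub_nonneg.mpr hx') (sub_nonneg.mpr hge)]
          _ ≤ ENNReal.ofReal δ := ENNReal.ofReal_le_ofReal hexpδ
      · -- d > 0 : right tail
        have h2dpos : 0 < 2 * d := by linarith
        have hge : μ₁ ≤ a := by
          have hle : 0 ≤ a - μ₁ := by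
            rw [haμ]
            exact div_nonneg hnum h2dpos.le
          linarith
        have hsub : S \ A ⊆ {x | a ≤ x} := by
          intro x hx
          have hkey := hcompl x hx.2
          show a ≤ x
          rw [ha_def, div_le_iff₀ h2dpos]
          nlinarith [hkey]
        calc gaussMeasure μ₁ v (S \ A)
            ≤ gaussMeasure μ₁ v {x | a ≤ x} := measure_mono hsub
          _ ≤ ENNReal.ofReal (Real.exp (-(a - μ₁) ^ 2 / (2 * v))) := by
              refine gauss_tail μ₁ a v hv0 _ measurableSet_Ici (fun x hx => ?_)
              have hx' : a ≤ x := hx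
              exact mul_nonneg (by linarith) (by linarith)
          _ ≤ ENNReal.ofReal δ := ENNReal.ofReal_le_ofReal hexpδ
  calc gaussMeasure μ₁ v S
      ≤ gaussMeasure μ₁ v (S ∩ A) + gaussMeasure μ₁ v (S \ A) :=
        measure_le_inter_add_diff _ _ _
    _ ≤ ENNReal.ofReal (Real.exp ε) * gaussMeasure μ₂ v (S ∩ A) + ENNReal.ofReal δ :=
        add_le_add h1 h2
    _ ≤ ENNReal.ofReal (Real.exp ε) * gaussMeasure μ₂ v S + ENNReal.ofReal δ :=
        add_le_add_left (mul_le_mul_right (measure_mono Set.inter_subset_left) _) _
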